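/- There exists a quaternary Hermitian LCD [26, 3, 19] code; that is, a 3-dimensional 𝔽₄-linear subspace C of 𝔽₄²⁶ with C ∩ C^{⊥H} = {0} whose minimum weight equals 19. -/

import Mathlib

/-! ### A computable model of the field with four elements -/

inductive K | O | I | A | B
deriving DecidableEq

instance : Fintype K where
  elems := ⟨↑[K.O, K.I, K.A, K.B], by decide⟩
  complete := fun x => by cases x <;> decide

namespace K

def add : K → K → K
  | O, x => x | x, O => x
  | I, I => O | I, A => B | I, B => A
  | A, I => B | A, A => O | A, B => I
  | B, I => A | B, A => I | B, B => O

def mul : K → K → K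
  | O, _ => O | _, O => O
  | I, x => x | x, I => x
  | A, A => B | A, B => I
  | B, A => I | B, B => A

instance : CommRing K where
  add := add
  zero := O
  neg := id
  mul := mul
  one := I
  add_assoc := by decide
  zero_add := by decide
  add_zero := by decide
  add_comm := by decide
  neg_add_cancel := by decide
  mul_assoc := by decide
  one_mul := by decide
  mul_one := by decide
  left_distrib := by decide
  right_distrib := by decide
  zero_mul := by decide
  mul_zero := by decide
  mul_comm := by decide
  nsmul := @nsmulRec K ⟨O⟩ ⟨add⟩
  zsmul := @zsmulRec K ⟨O⟩ ⟨add⟩ ⟨id⟩ (@nsmulRec K ⟨O⟩ ⟨add⟩)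
  nsmul_zero := fun _ => rfl
  nsmul_succ := fun _ _ => rfl
  zsmul_zero' := fun _ => rfl
  zsmul_succ' := fun _ _ => rfl
  zsmul_neg' := fun _ _ => rfl

lemma add_eq (x y : K) : x + y = add x y := rfl
lemma mul_eq (x y : K) : x * y = mul x y := rfl
lemma zero_eq : (0 : K) = O := rfl
lemma one_eq : (1 : K) = I := rfl

end K

/-! ### A generator matrix over `K` and the decidable checks -/

def r0L : List K := [K.O, K.I, K.I, K.I, K.I, K.I, K.I, K.I, K.I, K.O, K.O, K.I, K.I, K.O, K.I, K.I, K.O, K.I, K.O, K.I, K.I, K.I, K.I, K.I, K.I, K.O]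
def r1L : List K := [K.I, K.B, K.A, K.O, K.I, K.A, K.O, K.A, K.I, K.I, K.I, K.O, K.I, K.I, K.I, K.O, K.O, K.B, K.I, K.O, K.A, K.O, K.I, K.A, K.B, K.I]
def r2L : List K := [K.B, K.O, K.B, K.A, K.O, K.O, K.B, K.I, K.A, K.A, K.O, K.A, K.B, K.A, K.I, K.B, K.I, K.A, K.O, K.I, K.I, K.O, K.B, K.A, K.I, K.I]

def RK : Fin 3 → Fin 26 → K := fun i j =>
  ([r0L, r1L, r2L].getD i.1 []).getD j.1 K.O

def cwK (a b c : K) : Fin 26 → K := fun j => a * RK 0 j + b * RK 1 j + c * RK 2 j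

def wtK (y : Fin 26 → K) : ℕ := (Finset.univ.filter (fun i => y i ≠ 0)).card

def hermK (x y : Fin 26 → K) : K := ∑ i, x i * (y i * y i)

lemma P1 : ∀ a b c : K, ¬(a = 0 ∧ b = 0 ∧ c = 0) → 19 ≤ wtK (cwK a b c) := by decide

lemma P1' : wtK (cwK 1 0 0) = 19 := by decide

lemma P2 : ∀ a b c : K, ¬(a = 0 ∧ b = 0 ∧ c = 0) →
    ¬(hermK (cwK a b c) (RK 0) = 0 ∧ hermK (cwK a b c) (RK 1) = 0 ∧
      hermK (cwK a b c) (RK 2) = 0) := by decide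

open scoped Classical

noncomputable section

/-- The finite field with four elements. -/
abbrev F4 := GaloisField 2 2

/-- The (Hamming) weight of a vector over `F4`: the number of nonzero coordinates. -/
def wt {n : ℕ} (x : Fin n → F4) : ℕ :=
  (Finset.univ.filter (fun i => x i ≠ 0)).card

/-- Hermitian inner product on `F4^n`: `∑ i, x i * (conj (y i))` with `conj z = z^2`. -/
def hermInner {n : ℕ} (x y : Fin n → F4) : F4 :=
  ∑ i, x i * (y i) ^ 2

/-- Membership in the Hermitian dual `C^{⊥H}` of a code `C`. -/
def inHermDual {n : ℕ} (C : Submodule F4 (Fin n → F4)) (x : Fin n → F4) : Prop :=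
  ∀ y ∈ C, hermInner x y = 0

/-- `C` is Hermitian LCD: `C ∩ C^{⊥H} = {0}`. -/
def IsHermLCD {n : ℕ} (C : Submodule F4 (Fin n → F4)) : Prop :=
  ∀ x ∈ C, inHermDual C x → x = 0

/-- `C` has minimum weight (exactly) `d`. -/
def minWtIs {n : ℕ} (C : Submodule F4 (Fin n → F4)) (d : ℕ) : Prop :=
  (∃ x ∈ C, x ≠ 0 ∧ wt x = d) ∧ ∀ x ∈ C, x ≠ 0 → d ≤ wt x

/-- `C` is a quaternary Hermitian LCD `[n,k,d]` code. -/
def IsHermLCDCode (n k d : ℕ) (C : Submodule F4 (Fin n → F4)) : Prop :=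
  Module.finrank F4 C = k ∧ IsHermLCD C ∧ minWtIs C d

/-- `d₄(n,k) = d`: the largest minimum weight among quaternary Hermitian LCD `[n,k]` codes
is `d`. -/
def d4Is (n k d : ℕ) : Prop :=
  (∃ C : Submodule F4 (Fin n → F4), IsHermLCDCode n k d C) ∧
  (∀ C : Submodule F4 (Fin n → F4), Module.finrank F4 C = k → IsHermLCD C →
    ∃ x ∈ C, x ≠ 0 ∧ wt x ≤ d)

end

/-! ### Transferring the construction to `F4` -/

/-- The embedding of `K` into `F4`, parametrized by a primitive element `w`. -/
noncomputable def fw (w : F4) : K → F4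
  | K.O => 0
  | K.I => 1
  | K.A => w
  | K.B => w + 1

noncomputable section

lemma f4_facts : ∃ w : F4, w ≠ 0 ∧ w ≠ 1 ∧ w * w = w + 1 ∧ (2 : F4) = 0 := by
  haveI : Fintype F4 := Fintype.ofFinite F4
  have hcard : Fintype.card F4 = 4 := by
    rw [← Nat.card_eq_fintype_card]
    simpa using GaloisField.card 2 2 (by norm_num)
  have h2 : (2 : F4) = 0 := by
    have := CharP.cast_eq_zero F4 2
    exact_mod_cast this
  -- there is an element other than 0 and 1
  have hex : ∃ w : F4, w ≠ 0 ∧ w ≠ 1 := by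
    by_contra h
    push_neg at h
    have hsub : (Finset.univ : Finset F4) ⊆ {0, 1} := by
      intro x _
      rcases eq_or_ne x 0 with rfl | hx
      · simp
      · simp [h x hx]
    have := Finset.card_le_card hsub
    rw [Finset.card_univ, hcard] at this
    have h01 : ({0, 1} : Finset F4).card ≤ 2 := Finset.card_insert_le _ _ |>.trans (by simp)
    omega
  obtain ⟨w, hw0, hw1⟩ := hex
  refine ⟨w, hw0, hw1, ?_, h2⟩
  have h3 : w ^ 3 = 1 := by
    have := FiniteField.pow_card_sub_one_eq_one w hw0
    rwa [hcard] at this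
  have key : w * w + w + 1 = 0 := by
    have hne : w - 1 ≠ 0 := sub_ne_zero.mpr hw1
    have hz : (w - 1) * (w * w + w + 1) = 0 := by linear_combination h3
    exact (mul_eq_zero.mp hz).resolve_left hne
  linear_combination key - (w + 1) * h2

end

/-- there exists a quaternary Hermitian LCD `[26, 3, 19]` code. -/
theorem stmt10 :
    ∃ C : Submodule F4 (Fin 26 → F4), IsHermLCDCode 26 3 19 C := by
  classical
  obtain ⟨w, hw0, hw1, hsq, h2⟩ := f4_facts
  have hB0 : w + 1 ≠ 0 := by
    intro h
    apply hw1
    linear_combination h - h2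
  -- the ring hom
  have hfadd : ∀ x y : K, fw w (x + y) = fw w x + fw w y := by
    intro x y
    cases x <;> cases y <;>
      simp only [K.add_eq, K.add, fw] <;>
      first
        | ring1
        | linear_combination h2
        | linear_combination -h2
        | linear_combination w * h2
        | linear_combination -(w * h2)
        | linear_combination (w + 1) * h2
        | linear_combination -((w + 1) * h2)
  have hfmul : ∀ x y : K, fw w (x * y) = fw w x * fw w y := by
    intro x y
    cases x <;> cases y <;>
      simp only [K.mul_eq, K.mul, fw] <;>
      first
        | ring1
        | linear_combination hsq
        | linear_combination -hsq
        | linear_combination hsq + h2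
        | linear_combination -hsq - h2
        | linear_combination hsq + w * h2
        | linear_combination -hsq - w * h2
        | linear_combination hsq + (w + 1) * h2
        | linear_combination -hsq - (w + 1) * h2
        | linear_combination -hsq - w * h2 - h2
        | linear_combination hsq + w * h2 + h2
  let φ : K →+* F4 :=
    { toFun := fw w
      map_one' := rfl
      map_mul' := hfmul
      map_zero' := rfl
      map_add' := hfadd }
  have hker : ∀ z : K, φ z = 0 ↔ z = 0 := by
    intro z
    constructor
    · intro hz
      cases z with
      | O => rfl
      | I => exact absurd hz one_ne_zero
      | A => exact absurd hz hw0
      | B => exact absurd hz hB0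
    · rintro rfl; exact map_zero φ
  have hfinj : Function.Injective φ := by
    intro x y hxy
    have : φ (x - y) = 0 := by rw [map_sub, hxy, sub_self]
    have := (hker _).1 this
    exact sub_eq_zero.mp this
  have hsurj : Function.Surjective φ := by
    haveI : Fintype F4 := Fintype.ofFinite F4
    have hcards : Nat.card K = Nat.card F4 := by
      have h1 : Nat.card K = 4 := by
        rw [Nat.card_eq_fintype_card]
        decide
      have h4 : Nat.card F4 = 4 := by simpa using GaloisField.card 2 2 (by norm_num)
      rw [h1, h4]
    exact ((Nat.bijective_iff_injective_and_card φ).2 ⟨hfinj, hcards⟩).2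
  -- the code
  set g : Fin 3 → (Fin 26 → F4) := fun i j => φ (RK i j) with hg
  -- membership characterization
  have hmem : ∀ x : Fin 26 → F4, x ∈ Submodule.span F4 (Set.range g) ↔
      ∃ a b c : K, x = fun j => φ (cwK a b c j) := by
    intro x
    rw [Submodule.mem_span_range_iff_exists_fun]
    constructor
    · rintro ⟨cf, hc⟩
      obtain ⟨a, ha⟩ := hsurj (cf 0)
      obtain ⟨b, hb⟩ := hsurj (cf 1)
      obtain ⟨c, hcc⟩ := hsurj (cf 2)
      refine ⟨a, b, c, ?_⟩
      funext j
      rw [← hc]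
      simp only [Finset.sum_apply, Pi.smul_apply, smul_eq_mul, Fin.sum_univ_three,
        hg, cwK, map_add, map_mul, ha, hb, hcc]
    · rintro ⟨a, b, c, rfl⟩
      refine ⟨![φ a, φ b, φ c], ?_⟩
      funext j
      simp only [Finset.sum_apply, Pi.smul_apply, smul_eq_mul, Fin.sum_univ_three,
        hg, cwK, map_add, map_mul]
      simp [Matrix.cons_val_zero, Matrix.cons_val_one]
  -- weights transfer
  have hwt : ∀ y : Fin 26 → K, wt (fun j => φ (y j)) = wtK y := by
    intro y
    unfold wt wtK
    congr 1
    ext i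
    simp only [Finset.mem_filter, Finset.mem_univ, true_and]
    exact not_congr (hker (y i))
  -- the hermitian inner product transfers
  have hherm : ∀ x y : Fin 26 → K,
      hermInner (fun j => φ (x j)) (fun j => φ (y j)) = φ (hermK x y) := by
    intro x y
    unfold hermInner hermK
    rw [map_sum]
    refine Finset.sum_congr rfl fun i _ => ?_
    rw [map_mul, map_mul]
    ring
  -- nonzero coefficient vectors give nonzero codewords
  have hnz : ∀ a b c : K, ¬(a = 0 ∧ b = 0 ∧ c = 0) →
      (fun j => φ (cwK a b c j)) ≠ (0 : Fin 26 → F4) := by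
    intro a b c habc h0
    have hz : ∀ j, cwK a b c j = 0 := by
      intro j
      have := congrFun h0 j
      exact (hker _).1 this
    have hwz : wtK (cwK a b c) = 0 := by
      unfold wtK
      simp [hz]
    have := P1 a b c habc
    omega
  refine ⟨Submodule.span F4 (Set.range g), ?_, ?_, ?_, ?_⟩
  · -- finrank = 3
    have hli : LinearIndependent F4 g := by
      rw [Fintype.linearIndependent_iff]
      intro cf hc
      obtain ⟨a, ha⟩ := hsurj (cf 0)
      obtain ⟨b, hb⟩ := hsurj (cf 1)
      obtain ⟨c, hcc⟩ := hsurj (cf 2)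
      have hz : (fun j => φ (cwK a b c j)) = (0 : Fin 26 → F4) := by
        funext j
        rw [← congrFun hc j]
        simp only [Finset.sum_apply, Pi.smul_apply, smul_eq_mul, Fin.sum_univ_three,
          hg, cwK, map_add, map_mul, ha, hb, hcc]
      have habc : a = 0 ∧ b = 0 ∧ c = 0 := by
        by_contra h
        exact hnz a b c h hz
      intro i
      fin_cases i
      · show cf 0 = 0
        rw [← ha, habc.1, map_zero]
      · show cf 1 = 0
        rw [← hb, habc.2.1, map_zero]
      · show cf 2 = 0
        rw [← hcc, habc.2.2, map_zero]
    have := finrank_span_eq_card hli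
    simpa using this
  · -- Hermitian LCD
    intro x hx hdual
    obtain ⟨a, b, c, rfl⟩ := (hmem x).1 hx
    have hj : ∀ i : Fin 3, hermK (cwK a b c) (RK i) = 0 := by
      intro i
      have hgi : g i ∈ Submodule.span F4 (Set.range g) :=
        Submodule.subset_span ⟨i, rfl⟩
      have := hdual (g i) hgi
      rw [show g i = fun j => φ (RK i j) from rfl, hherm] at this
      exact (hker _).1 this
    have habc : a = 0 ∧ b = 0 ∧ c = 0 := by
      by_contra h
      exact P2 a b c h ⟨hj 0, hj 1, hj 2⟩
    obtain ⟨rfl, rfl, rfl⟩ := habc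
    funext j
    simp [cwK]
  · -- a word of weight 19
    refine ⟨fun j => φ (cwK 1 0 0 j), (hmem _).2 ⟨1, 0, 0, rfl⟩, ?_, ?_⟩
    · exact hnz 1 0 0 (by simp)
    · rw [hwt]
      exact P1'
  · -- minimum weight bound
    intro x hx hxne
    obtain ⟨a, b, c, rfl⟩ := (hmem x).1 hx
    have habc : ¬(a = 0 ∧ b = 0 ∧ c = 0) := by
      rintro ⟨rfl, rfl, rfl⟩
      apply hxne
      funext j
      simp [cwK]
    rw [hwt]
    exact P1 a b c habc
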